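/- Let δ : C → ℝ be a positive function on an open convex cone C in a finite-dimensional real vector space satisfying: (i) δ(λx) = λ⁻¹ δ(x) for all λ > 0 and x ∈ C, and (ii) there exists ε₀ > 0 such that for all ε ∈ (0, ε₀) and all x, y ∈ C with both (1+ε)x − y ∈ C and y − (1−ε)x ∈ C, one has δ(x + εy) ≤ δ(x) ≤ δ(x − εy) whenever x + εy, x − εy ∈ C. Then δ is continuous on C. -/

import Mathlib

/-- Dervan's strategy, abstractly: a positive function on an open convex cone satisfying
the scaling property and a weak comparison principle is continuous on the cone. -/
theorem stmt2 {V : Type*} [NormedAddCommGroup V] [NormedSpace ℝ V]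
    [FiniteDimensional ℝ V]
    (C : Set V) (hCopen : IsOpen C)
    (hCsmul : ∀ (lam : ℝ), 0 < lam → ∀ x ∈ C, lam • x ∈ C)
    (hCadd : ∀ x ∈ C, ∀ y ∈ C, x + y ∈ C)
    (δ : V → ℝ) (hpos : ∀ x ∈ C, 0 < δ x)
    (hscale : ∀ (lam : ℝ), 0 < lam → ∀ x ∈ C, δ (lam • x) = lam⁻¹ * δ x)
    (ε₀ : ℝ) (hε₀ : 0 < ε₀)
    (hcomp : ∀ ε : ℝ, 0 < ε → ε < ε₀ → ∀ x ∈ C, ∀ y ∈ C,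
      (1 + ε) • x - y ∈ C → y - (1 - ε) • x ∈ C →
      (x + ε • y ∈ C → δ (x + ε • y) ≤ δ x) ∧
      (x - ε • y ∈ C → δ x ≤ δ (x - ε • y))) :
    ContinuousOn δ C := by
  intro x hx
  have hδx := hpos x hx
  rw [ContinuousWithinAt, Metric.tendsto_nhds]
  intro η hη
  set ε : ℝ := min (min 1 ε₀) (η / δ x) / 2 with hεdef
  have hεpos : 0 < ε := by
    have : 0 < min (min 1 ε₀) (η / δ x) :=
      lt_min (lt_min one_pos hε₀) (div_pos hη hδx)
    positivity
  have hε1 : ε < 1 := by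
    have h := min_le_left (min 1 ε₀) (η / δ x)
    have h2 := min_le_left (1:ℝ) ε₀
    simp only [hεdef]; linarith
  have hεε₀ : ε < ε₀ := by
    have h := min_le_left (min 1 ε₀) (η / δ x)
    have h2 := min_le_right (1:ℝ) ε₀
    simp only [hεdef]; linarith
  have hεη : ε * δ x < η := by
    have h := min_le_right (min 1 ε₀) (η / δ x)
    have : ε ≤ (η / δ x) / 2 := by simp only [hεdef]; linarith
    have h2 := mul_le_mul_of_nonneg_right this hδx.le
    have h3 : (η / δ x / 2) * δ x = η / 2 := by field_simp
    rw [h3] at h2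
    linarith
  have hεne : ε ≠ 0 := hεpos.ne'
  have key : ∀ f : V → V, Continuous f → f x ∈ C → ∀ᶠ z in nhds x, f z ∈ C := by
    intro f hf hfx
    exact hf.continuousAt.preimage_mem_nhds (hCopen.mem_nhds hfx)
  have hεx : (ε : ℝ) • x ∈ C := hCsmul ε hεpos x hx
  -- y₁ z = ε⁻¹ • ((1+ε) • z - x)
  have e1 : ∀ᶠ z in nhds x, ε⁻¹ • ((1+ε) • z - x) ∈ C := by
    apply key _ (by fun_prop)
    have : ε⁻¹ • ((1+ε) • x - x) = x := by
      match_scalars; field_simp; ring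
    rw [this]; exact hx
  have e2 : ∀ᶠ z in nhds x, (1+ε) • x - ε⁻¹ • ((1+ε) • z - x) ∈ C := by
    apply key _ (by fun_prop)
    have : (1+ε) • x - ε⁻¹ • ((1+ε) • x - x) = ε • x := by
      match_scalars <;> field_simp <;> ring_nf
    rw [this]; exact hεx
  have e3 : ∀ᶠ z in nhds x, ε⁻¹ • ((1+ε) • z - x) - (1-ε) • x ∈ C := by
    apply key _ (by fun_prop)
    have : ε⁻¹ • ((1+ε) • x - x) - (1-ε) • x = ε • x := by
      match_scalars <;> field_simp <;> ring_nf
    rw [this]; exact hεx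
  -- y₂ z = ε⁻¹ • (x - (1-ε) • z)
  have e4 : ∀ᶠ z in nhds x, ε⁻¹ • (x - (1-ε) • z) ∈ C := by
    apply key _ (by fun_prop)
    have : ε⁻¹ • (x - (1-ε) • x) = x := by
      match_scalars; field_simp; ring
    rw [this]; exact hx
  have e5 : ∀ᶠ z in nhds x, (1+ε) • x - ε⁻¹ • (x - (1-ε) • z) ∈ C := by
    apply key _ (by fun_prop)
    have : (1+ε) • x - ε⁻¹ • (x - (1-ε) • x) = ε • x := by
      match_scalars <;> field_simp <;> ring_nf
    rw [this]; exact hεx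
  have e6 : ∀ᶠ z in nhds x, ε⁻¹ • (x - (1-ε) • z) - (1-ε) • x ∈ C := by
    apply key _ (by fun_prop)
    have : ε⁻¹ • (x - (1-ε) • x) - (1-ε) • x = ε • x := by
      match_scalars <;> field_simp <;> ring_nf
    rw [this]; exact hεx
  filter_upwards [self_mem_nhdsWithin,
    nhdsWithin_le_nhds e1, nhdsWithin_le_nhds e2, nhdsWithin_le_nhds e3,
    nhdsWithin_le_nhds e4, nhdsWithin_le_nhds e5, nhdsWithin_le_nhds e6]
    with z hzC hy1 hc1 hc2 hy2 hc3 hc4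
  have hz1 : x + ε • (ε⁻¹ • ((1+ε) • z - x)) = (1+ε) • z := by
    match_scalars <;> field_simp <;> ring
  have hz2 : x - ε • (ε⁻¹ • (x - (1-ε) • z)) = (1-ε) • z := by
    match_scalars <;> field_simp <;> ring_nf
  have h1p : (0:ℝ) < 1 + ε := by linarith
  have h1m : (0:ℝ) < 1 - ε := by linarith
  have hup := (hcomp ε hεpos hεε₀ x hx _ hy1 hc1 hc2).1
  have hdn := (hcomp ε hεpos hεε₀ x hx _ hy2 hc3 hc4).2
  rw [hz1] at hup
  rw [hz2] at hdn
  have hup' := hup (hCsmul _ h1p z hzC)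
  have hdn' := hdn (hCsmul _ h1m z hzC)
  rw [hscale _ h1p z hzC] at hup'
  rw [hscale _ h1m z hzC] at hdn'
  -- hup' : (1+ε)⁻¹ * δ z ≤ δ x,  hdn' : δ x ≤ (1-ε)⁻¹ * δ z
  rw [inv_mul_le_iff₀ h1p] at hup'
  rw [le_inv_mul_iff₀ h1m] at hdn'
  rw [Real.dist_eq, abs_sub_lt_iff]
  constructor <;> nlinarith
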